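/- Let k₁, k₂ be positive integers and k = k₁ + k₂. Let p ∈ P_k, p₁ ∈ P_{k₁}, p₂ ∈ P_{k₂}, and suppose p₁⊗p₂ is finer than p. Then df(p₁⊗p₂, p) = df(p₁, p^l) + df(p₂, p^r) + df(p^l⊗p^r, p), where p^l ∈ P_{k₁} and p^r ∈ P_{k₂} are the left and right parts of p and df denotes the defect with base id. In particular, p₁⊗p₂ ⊐ p if and only if p₁ ⊐ p^l, p₂ ⊐ p^r, and p^l⊗p^r ⊐ p. -/

import Mathlib

open Sum
open scoped Classical

noncomputable section

namespace PartitionPaper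

variable {X : Type*}

/-- The number of blocks of a partition of `X`, encoded as a setoid on `X`. -/
def nc (p : Setoid X) : ℕ := Nat.card (Quotient p)

/-- The geodesic distance `d(p,p') = (nc p + nc p')/2 - nc (p ⊔ p')`. -/
def pdist (p q : Setoid X) : ℚ :=
  ((nc p : ℚ) + (nc q : ℚ)) / 2 - (nc (p ⊔ q) : ℚ)

/-- Geodesic order with base partition `b` : `p' ≤_b p`. -/
def geoLE (b p' p : Setoid X) : Prop := pdist b p' + pdist p' p = pdist b p

/-- Coarser-compatible order `p' ⊣_b p` : `p'` coarser than `p` and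
`nc (p' ⊔ b) = nc (p ⊔ b)`.  (In the setoid lattice, `p ≤ p'` means `p` is finer.) -/
def coarserComp (b p' p : Setoid X) : Prop :=
  p ≤ p' ∧ nc (p' ⊔ b) = nc (p ⊔ b)

/-- Finer-compatible order `p' ⊐_b p` : `p'` finer than `p` and
`nc p' - nc (p' ⊔ b) = nc p - nc (p ⊔ b)`. -/
def finerComp (b p' p : Setoid X) : Prop :=
  p' ≤ p ∧ (nc p' : ℤ) - (nc (p' ⊔ b) : ℤ) = (nc p : ℤ) - (nc (p ⊔ b) : ℤ)

/-- `p'` is obtained from `p` by gluing two blocks of `p` into one. -/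
def IsGluing (p p' : Setoid X) : Prop := p ≤ p' ∧ nc p' + 1 = nc p

/-- The Cayley graph on partitions of `X`: an edge iff one partition is obtained
from the other by gluing two of its blocks into one. -/
def glueGraph (X : Type*) : SimpleGraph (Setoid X) where
  Adj p q := IsGluing p q ∨ IsGluing q p
  symm := ⟨fun _ _ h => h.elim Or.inr Or.inl⟩
  loopless := by
    refine ⟨?_⟩
    intro p h
    rcases h with ⟨-, h⟩ | ⟨-, h⟩ <;> omega

/-- The segment `[p₁, p₂]` for the geodesic distance. -/
def seg (p₁ p₂ : Setoid X) : Set (Setoid X) :=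
  {p | pdist p₁ p + pdist p p₂ = pdist p₁ p₂}

/-- The defect of `p'` from being on `[b, p]`. -/
def df (b p' p : Setoid X) : ℚ := pdist b p' + pdist p' p - pdist b p

/-- Admissible one-step splits: `p'` is obtained by cutting a (pivotal) block of `p`
into two blocks in such a way that the join with `b` gains one block. -/
def Delta (b p : Setoid X) : Set (Setoid X) :=
  {p' | p' ≤ p ∧ nc p' = nc p + 1 ∧ nc (p' ⊔ b) = nc (p ⊔ b) + 1}

/-- The admissible splits `Sp_b(p) = ⋃ₘ Δ_b^m(p)`. -/
def Sp (b p : Setoid X) : Set (Setoid X) :=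
  {p' | Relation.ReflTransGen (fun u v => v ∈ Delta b u) p p'}

/-- The admissible gluings `Gl_b(p)`: partitions obtained by gluing blocks of `p`
without altering the number of blocks of the join with `b`. -/
def Gl (b p : Setoid X) : Set (Setoid X) :=
  {p' | p ≤ p' ∧ nc (p' ⊔ b) = nc (p ⊔ b)}

/-- `p'` is directly smaller than `p` for the relation `r`. -/
def DirectlySmaller (r : Setoid X → Setoid X → Prop) (p' p : Setoid X) : Prop :=
  r p' p ∧ p' ≠ p ∧ ¬ ∃ p'', p'' ≠ p ∧ p'' ≠ p' ∧ r p' p'' ∧ r p'' p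

/-- The block of the partition `p` corresponding to a class `c`. -/
def blockSet (p : Setoid X) (c : Quotient p) : Set X := {x | Quotient.mk p x = c}

/-- The number of blocks of `q` contained in the block `c` of `p`. -/
def numSubBlocks (q p : Setoid X) (c : Quotient p) : ℕ :=
  Nat.card {d : Quotient q // blockSet q d ⊆ blockSet p c}

/-- The number of blocks of `p` containing exactly `i` blocks of `q`. -/
def rcount (q p : Setoid X) (i : ℕ) : ℕ :=
  Nat.card {c : Quotient p // numSubBlocks q p c = i}

/-- The Möbius function of the refinement order:
`μ_f(q,p) = (-1)^(nc q - nc p) ∏_i ((i-1)!)^(r_i)` for `q` finer than `p`. -/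
def muf (q p : Setoid X) : ℤ :=
  (-1) ^ (nc q - nc p) *
    ∏ i ∈ Finset.range (nc q + 1), ((Nat.factorial (i - 1) : ℤ)) ^ (rcount q p i)

/-- `P_k`: partitions of `{1,…,k} ∪ {1',…,k'}`, the left summand being the
unprimed (top) row and the right summand the primed (bottom) row. -/
abbrev Pk (k : ℕ) := Setoid (Fin k ⊕ Fin k)

/-- The identity partition `id_k = {{i, i'} : 1 ≤ i ≤ k}`. -/
def idk (k : ℕ) : Pk k := Setoid.ker (Sum.elim id id)

/-- The permutation partition associated with `σ`, with blocks `{i, σ(i)'}`. -/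
def permPartition {k : ℕ} (σ : Equiv.Perm (Fin k)) : Pk k :=
  Setoid.ker (Sum.elim id σ.symm)

/-- `S_k`, the set of permutation partitions. -/
def Sk (k : ℕ) : Set (Pk k) := Set.range (permPartition (k := k))

/-- `B_k`, the set of Brauer partitions: all blocks have exactly two elements. -/
def Bk (k : ℕ) : Set (Pk k) := {p | ∀ x, Nat.card {y | p.r x y} = 2}

/-- Embedding of the top/bottom rows of the upper diagram `q` into the
three-row diagram (top ⊕ (middle ⊕ bottom)). -/
def upMap (k : ℕ) : Fin k ⊕ Fin k → Fin k ⊕ (Fin k ⊕ Fin k) :=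
  Sum.elim Sum.inl (fun i => Sum.inr (Sum.inl i))

/-- Embedding of the top/bottom rows of the lower diagram `p` into the
three-row diagram. -/
def downMap (k : ℕ) : Fin k ⊕ Fin k → Fin k ⊕ (Fin k ⊕ Fin k) :=
  Sum.elim (fun i => Sum.inr (Sum.inl i)) (fun i => Sum.inr (Sum.inr i))

/-- The partition of the three-row diagram obtained by stacking a diagram of `q`
on top of a diagram of `p` (identifying the bottom row of `q` with the top row
of `p`): the equivalence relation generated by the copies of `q` and `p`. -/
def stackSetoid {k : ℕ} (p q : Pk k) : Setoid (Fin k ⊕ (Fin k ⊕ Fin k)) :=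
  sInf {s | ∀ x y,
    ((∃ a b, upMap k a = x ∧ upMap k b = y ∧ q.r a b) ∨
     (∃ a b, downMap k a = x ∧ downMap k b = y ∧ p.r a b)) → s.r x y}

/-- The composition `p ∘ q` (a diagram of `q` stacked above a diagram of `p`),
obtained by restricting the stacked partition to the outer rows. -/
def comp {k : ℕ} (p q : Pk k) : Pk k :=
  Setoid.comap (Sum.elim Sum.inl (fun i => Sum.inr (Sum.inr i))) (stackSetoid p q)

/-- `κ(p,q)`: the number of connected components of the stacked diagram entirely
contained in the middle row. -/
def kappaP {k : ℕ} (p q : Pk k) : ℕ :=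
  Nat.card {c : Quotient (stackSetoid p q) //
    ∀ x, Quotient.mk (stackSetoid p q) x = c → ∃ i : Fin k, x = Sum.inr (Sum.inl i)}

/-- The transpose `ᵗp`, exchanging the two rows. -/
def transpose {k : ℕ} (p : Pk k) : Pk k := Setoid.comap Sum.swap p

/-- The disjoint-union partition on a sum type. -/
def sumSetoid {α β : Type*} (p : Setoid α) (q : Setoid β) : Setoid (α ⊕ β) :=
  Setoid.ker (Sum.map (Quotient.mk p) (Quotient.mk q))

/-- Reindexing of the rows for the tensor product. -/
def reindex (k l : ℕ) :
    Fin (k + l) ⊕ Fin (k + l) → (Fin k ⊕ Fin k) ⊕ (Fin l ⊕ Fin l) :=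
  Sum.elim
    (fun j => Sum.elim (fun a => Sum.inl (Sum.inl a)) (fun b => Sum.inr (Sum.inl b))
      (finSumFinEquiv.symm j))
    (fun j => Sum.elim (fun a => Sum.inl (Sum.inr a)) (fun b => Sum.inr (Sum.inr b))
      (finSumFinEquiv.symm j))

/-- The tensor product `p ⊗ q ∈ P_{k+l}`: a diagram of `p` placed to the left of
a diagram of `q`. -/
def tensor {k l : ℕ} (p : Pk k) (q : Pk l) : Pk (k + l) :=
  Setoid.comap (reindex k l) (sumSetoid p q)

/-- The `≺`-defect `η(p,q)`. -/
def eta {k : ℕ} (p q : Pk k) : ℚ :=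
  pdist (idk k) p + pdist (idk k) q - pdist (idk k) (comp p q)
    - ((k : ℚ) + (nc (comp p q) : ℚ) - (nc p : ℚ) - (nc q : ℚ)) / 2 - (kappaP p q : ℚ)

/-- The Kreweras complement of `p'` in `p`: the set of `p''` with `p = p' ∘ p''`
realizing equality in the `≺`-defect inequality. -/
def Krew {k : ℕ} (p p' : Pk k) : Set (Pk k) :=
  {p'' | comp p' p'' = p ∧ eta p' p'' = 0}

/-- `p' ≺ p` : `p'` is an admissible prefix of `p`. -/
def prec {k : ℕ} (p' p : Pk k) : Prop :=
  ∃ p'', comp p' p'' = p ∧ eta p' p'' = 0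

/-- The partition of `{1,…,k}` into the orbits (cycles) of the permutation `σ`. -/
def cycleSetoid {k : ℕ} (σ : Equiv.Perm (Fin k)) : Setoid (Fin k) :=
  ⟨σ.SameCycle,
    ⟨fun x => Equiv.Perm.SameCycle.refl σ x, fun h => h.symm, fun h₁ h₂ => h₁.trans h₂⟩⟩

/-- A partition of `{1,…,k}` is non-crossing if there are no `a < b < c < d` with
`a, c` in one block and `b, d` in a different block. -/
def NonCrossing {k : ℕ} (π : Setoid (Fin k)) : Prop :=
  ¬ ∃ a b c d : Fin k, a < b ∧ b < c ∧ c < d ∧ π.r a c ∧ π.r b d ∧ ¬ π.r a b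

/-- The map sending a permutation partition to the partition of `{1,…,k}` into
the orbits of the corresponding bijection (the blocks of `p ⊔ id_k` restricted
to the top row). -/
def orbitMap {k : ℕ} (p : Pk k) : Setoid (Fin k) :=
  Setoid.comap (Sum.inl : Fin k → Fin k ⊕ Fin k) (p ⊔ idk k)

/-- The permutation `(1,k+1)(2,k+2)⋯(k,2k)` of `{1,…,2k}`. -/
def tauPerm (k : ℕ) : Equiv.Perm (Fin (k + k)) :=
  (finSumFinEquiv.symm.trans (Equiv.sumComm (Fin k) (Fin k))).trans finSumFinEquiv

/-- The left part of a partition in `P_{k₁+k₂}`. -/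
def leftPart {k₁ k₂ : ℕ} (p : Pk (k₁ + k₂)) : Pk k₁ :=
  Setoid.comap (Sum.map (Fin.castAdd k₂) (Fin.castAdd k₂)) p

/-- The right part of a partition in `P_{k₁+k₂}`. -/
def rightPart {k₁ k₂ : ℕ} (p : Pk (k₁ + k₂)) : Pk k₂ :=
  Setoid.comap (Sum.map (Fin.natAdd k₁) (Fin.natAdd k₁)) p

/-- The `p`-moment `m_p(E_N) = Tr_N(E_N ᵗp)/N^{nc(p ⊔ id_k)}
`= ∑_{p'} (E_N)_{p'} N^{nc(p ⊔ p') - nc(p ⊔ id_k)}`. -/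
def momentF {k : ℕ} (E : ℕ → Pk k → ℂ) (p : Pk k) (N : ℕ) : ℂ :=
  ∑ᶠ p' : Pk k, E N p' * (N : ℂ) ^ ((nc (p ⊔ p') : ℤ) - (nc (p ⊔ idk k) : ℤ))

/-- The `p`-cumulant `κ_p(E_N) = N^{nc p - nc (p ⊔ id_k)} (E_N)_p`. -/
def cumulantF {k : ℕ} (E : ℕ → Pk k → ℂ) (p : Pk k) (N : ℕ) : ℂ :=
  (N : ℂ) ^ ((nc p : ℤ) - (nc (p ⊔ idk k) : ℤ)) * E N p

/-! ### Auxiliary lemmas for Statement 14 -/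

section Aux

/-- surjection between quotients from `q ≤ q'`. -/
private def qmap {q q' : Setoid X} (h : q ≤ q') : Quotient q → Quotient q' :=
  Quotient.lift (Quotient.mk q') (fun _ _ hab => Quotient.sound (h hab))

private lemma qmap_surj {q q' : Setoid X} (h : q ≤ q') : Function.Surjective (qmap h) :=
  fun c => Quotient.inductionOn c (fun a => ⟨Quotient.mk q a, rfl⟩)

private lemma nc_anti [Finite X] {q q' : Setoid X} (h : q ≤ q') : nc q' ≤ nc q :=
  Nat.card_le_card_of_surjective _ (qmap_surj h)

private lemma eq_of_le_of_nc_eq [Finite X] {q q' : Setoid X} (h : q ≤ q')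
    (hn : nc q' = nc q) : q = q' := by
  have hbij : Function.Bijective (qmap h) :=
    (Nat.bijective_iff_surjective_and_card _).2 ⟨qmap_surj h, hn.symm⟩
  refine Setoid.ext fun a b => ⟨fun hab => h hab, fun hab => ?_⟩
  have h1 : qmap h (Quotient.mk q a) = qmap h (Quotient.mk q b) := Quotient.sound hab
  exact Quotient.exact (hbij.1 h1)

/-- the pair setoid -/
private def pairSetoid (x y : X) : Setoid X :=
  ⟨fun a b => a = b ∨ (a = x ∧ b = y) ∨ (a = y ∧ b = x), by
    refine ⟨fun a => Or.inl rfl, ?_, ?_⟩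
    · rintro a b (rfl | ⟨rfl, rfl⟩ | ⟨rfl, rfl⟩)
      · exact Or.inl rfl
      · exact Or.inr (Or.inr ⟨rfl, rfl⟩)
      · exact Or.inr (Or.inl ⟨rfl, rfl⟩)
    · rintro a b c (rfl | ⟨ha, hb⟩ | ⟨ha, hb⟩) (rfl | ⟨hc, hd⟩ | ⟨hc, hd⟩) <;>
        simp_all ⟩

private lemma pairSetoid_rel (x y : X) : (pairSetoid x y) x y := Or.inr (Or.inl ⟨rfl, rfl⟩)

private lemma pairSetoid_le {p : Setoid X} {x y : X} (h : p x y) : pairSetoid x y ≤ p := by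
  rintro a b (rfl | ⟨rfl, rfl⟩ | ⟨rfl, rfl⟩)
  · exact p.iseqv.refl a
  · exact h
  · exact p.symm h

/-- `nc q ≤ nc (q ⊔ pairSetoid x y) + 1`. -/
private lemma nc_le_nc_sup_pair [Finite X] (q : Setoid X) (x y : X) :
    nc q ≤ nc (q ⊔ pairSetoid x y) + 1 := by
  set s := pairSetoid x y with hs
  set f : X → Quotient q := fun a =>
    if q a x ∨ q a y then Quotient.mk q x else Quotient.mk q a with hf
  have hresp : ∀ a b, (q ⊔ s) a b → f a = f b := by
    intro a b hab
    rw [Setoid.sup_def] at hab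
    induction hab with
    | rel a b hab =>
        rcases hab with hab | hab
        · by_cases hax : q a x ∨ q a y
          · have hbx : q b x ∨ q b y := by
              rcases hax with h' | h'
              · exact Or.inl (q.trans (q.symm hab) h')
              · exact Or.inr (q.trans (q.symm hab) h')
            simp [hf, hax, hbx]
          · have hbx : ¬ (q b x ∨ q b y) := by
              rintro (h' | h')
              · exact hax (Or.inl (q.trans hab h'))
              · exact hax (Or.inr (q.trans hab h'))
            simp only [hf, if_neg hax, if_neg hbx]
            exact Quotient.sound hab
        · rcases hab with rfl | ⟨ha, hb⟩ | ⟨ha, hb⟩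
          · rfl
          · rw [ha, hb]; simp only [hf]
            rw [if_pos (Or.inl (q.iseqv.refl x)), if_pos (Or.inr (q.iseqv.refl y))]
          · rw [ha, hb]; simp only [hf]
            rw [if_pos (Or.inr (q.iseqv.refl y)), if_pos (Or.inl (q.iseqv.refl x))]
    | refl a => rfl
    | symm _ _ _ ih => exact ih.symm
    | trans _ _ _ _ _ ih1 ih2 => exact ih1.trans ih2
  set g : Quotient (q ⊔ s) ⊕ Unit → Quotient q :=
    Sum.elim (Quotient.lift f hresp) (fun _ => Quotient.mk q y) with hg
  have hsurj : Function.Surjective g := by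
    intro c
    refine Quotient.inductionOn c (fun a => ?_)
    by_cases hax : q a x
    · refine ⟨Sum.inl (Quotient.mk _ x), ?_⟩
      simp only [hg, Sum.elim_inl, Quotient.lift_mk, hf, ite_self]
      exact (Quotient.sound hax).symm
    · by_cases hay : q a y
      · exact ⟨Sum.inr (), (Quotient.sound hay).symm⟩
      · refine ⟨Sum.inl (Quotient.mk _ a), ?_⟩
        simp only [hg, Sum.elim_inl, Quotient.lift_mk, hf]
        rw [if_neg (by tauto)]
  have h1 := Nat.card_le_card_of_surjective g hsurj
  simpa [nc, Nat.card_sum] using h1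

private lemma nc_sup_le [Finite X] (q : Setoid X) (s : Setoid X) : nc (q ⊔ s) ≤ nc q :=
  nc_anti le_sup_left

/-- the one-pair step lemma -/
private lemma step_lemma [Finite X] (b q : Setoid X) (x y : X) :
    (nc (q ⊔ pairSetoid x y) : ℤ) - nc (q ⊔ pairSetoid x y ⊔ b) ≤
      (nc q : ℤ) - nc (q ⊔ b) := by
  set s := pairSetoid x y with hs
  by_cases hxy : q x y
  · have h0 : q ⊔ s = q := sup_eq_left.mpr (pairSetoid_le hxy)
    rw [h0]
  · have hassoc : q ⊔ s ⊔ b = (q ⊔ b) ⊔ s := by rw [sup_right_comm]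
    rw [hassoc]
    by_cases h2 : nc ((q ⊔ b) ⊔ s) = nc (q ⊔ b)
    · rw [h2]
      have h3 : nc (q ⊔ s) ≤ nc q := nc_sup_le q s
      omega
    · have hle1 : nc ((q ⊔ b) ⊔ s) ≤ nc (q ⊔ b) := nc_sup_le _ s
      have hge1 : nc (q ⊔ b) ≤ nc ((q ⊔ b) ⊔ s) + 1 := nc_le_nc_sup_pair (q ⊔ b) x y
      have hne : nc (q ⊔ s) ≠ nc q := by
        intro heq
        have h4 : q = q ⊔ s := eq_of_le_of_nc_eq le_sup_left heq
        have hle : s ≤ q := h4 ▸ le_sup_right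
        exact hxy (hle (pairSetoid_rel x y))
      have hle2 : nc (q ⊔ s) ≤ nc q := nc_sup_le q s
      omega

/-- fold of pair setoids -/
private def pfold (q : Setoid X) : List (X × X) → Setoid X
  | [] => q
  | z :: L => pfold (q ⊔ pairSetoid z.1 z.2) L

private lemma le_pfold (q : Setoid X) (L : List (X × X)) : q ≤ pfold q L := by
  induction L generalizing q with
  | nil => exact le_rfl
  | cons z L ih => exact le_trans le_sup_left (ih _)

private lemma pfold_le {p : Setoid X} (L : List (X × X)) (hL : ∀ z ∈ L, p z.1 z.2) :
    ∀ q, q ≤ p → pfold q L ≤ p := by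
  induction L with
  | nil => exact fun q h => h
  | cons z L ih =>
      intro q hq
      exact ih (fun w hw => hL w (List.mem_cons_of_mem _ hw)) _
        (sup_le hq (pairSetoid_le (hL z List.mem_cons_self)))

private lemma mem_pfold_rel (q : Setoid X) (L : List (X × X)) {z : X × X} (hz : z ∈ L) :
    (pfold q L) z.1 z.2 := by
  induction L generalizing q with
  | nil => exact (List.not_mem_nil hz).elim
  | cons w L ih =>
      rcases List.mem_cons.mp hz with h | h
      · subst h
        exact le_pfold _ L (le_sup_right (a := q) (pairSetoid_rel z.1 z.2))
      · exact ih _ h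

private lemma pfold_defect [Finite X] (b : Setoid X) (L : List (X × X)) :
    ∀ q, (nc (pfold q L) : ℤ) - nc (pfold q L ⊔ b) ≤ (nc q : ℤ) - nc (q ⊔ b) := by
  induction L with
  | nil => exact fun q => le_rfl
  | cons z L ih =>
      intro q
      exact le_trans (ih (q ⊔ pairSetoid z.1 z.2)) (step_lemma b q z.1 z.2)

/-- key monotonicity: if `p'` is finer than `p`, its defect quantity is larger. -/
private lemma defect_mono [Finite X] (b : Setoid X) {p' p : Setoid X} (h : p' ≤ p) :
    (nc p : ℤ) - nc (p ⊔ b) ≤ (nc p' : ℤ) - nc (p' ⊔ b) := by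
  have := Fintype.ofFinite X
  set L : List (X × X) := (Finset.univ.filter (fun z : X × X => p z.1 z.2)).toList with hL
  have hLmem : ∀ z ∈ L, p z.1 z.2 := by
    intro z hz
    exact (Finset.mem_filter.mp (Finset.mem_toList.mp hz)).2
  have h1 : pfold p' L = p := by
    refine le_antisymm (pfold_le L hLmem p' h) ?_
    intro x y hxy
    have hz : ((x, y) : X × X) ∈ L := by
      rw [hL, Finset.mem_toList, Finset.mem_filter]
      exact ⟨Finset.mem_univ _, hxy⟩
    exact mem_pfold_rel p' L hz
  have h2 := pfold_defect b L p'
  rw [h1] at h2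
  exact h2

private lemma df_eq_of_le {b p' p : Setoid X} (h : p' ≤ p) :
    df b p' p = (((nc p' : ℤ) - nc (p' ⊔ b)) - ((nc p : ℤ) - nc (p ⊔ b)) : ℤ) := by
  have h1 : p' ⊔ p = p := sup_eq_right.mpr h
  have h2 : b ⊔ p' = p' ⊔ b := sup_comm b p'
  have h3 : b ⊔ p = p ⊔ b := sup_comm b p
  simp only [df, pdist, h1, h2, h3]
  push_cast
  ring

end Aux

section TensorAux

variable {α β γ δ : Type*}

private def setoidComapIso (e : α ≃ β) : Setoid β ≃o Setoid α where
  toFun s := Setoid.comap e s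
  invFun s := Setoid.comap e.symm s
  left_inv s := Setoid.ext fun a b => by
    show s (e (e.symm a)) (e (e.symm b)) ↔ s a b; simp
  right_inv s := Setoid.ext fun a b => by
    show s (e.symm (e a)) (e.symm (e b)) ↔ s a b; simp
  map_rel_iff' := by
    intro s t
    constructor
    · intro h x y hxy
      have h1 : (Setoid.comap e s) (e.symm x) (e.symm y) := by
        show s (e (e.symm x)) (e (e.symm y))
        simpa using hxy
      have h2 : t (e (e.symm x)) (e (e.symm y)) := h h1
      simpa using h2
    · intro h x y hxy
      exact h hxy

private lemma comap_equiv_sup (e : α ≃ β) (s t : Setoid β) :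
    Setoid.comap e (s ⊔ t) = Setoid.comap e s ⊔ Setoid.comap e t :=
  (setoidComapIso e).map_sup s t

private lemma nc_comap_equiv (e : α ≃ β) (s : Setoid β) : nc (Setoid.comap e s) = nc s :=
  Nat.card_congr (Quotient.congr e (fun _ _ => Iff.rfl))

private lemma sumSetoid_rel_inl (p : Setoid α) (q : Setoid β) (a b : α) :
    sumSetoid p q (Sum.inl a) (Sum.inl b) ↔ p a b := by
  show Sum.map _ _ (Sum.inl a) = Sum.map _ _ (Sum.inl b) ↔ _
  simp [Sum.map, Quotient.eq]

private lemma sumSetoid_rel_inr (p : Setoid α) (q : Setoid β) (a b : β) :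
    sumSetoid p q (Sum.inr a) (Sum.inr b) ↔ q a b := by
  show Sum.map _ _ (Sum.inr a) = Sum.map _ _ (Sum.inr b) ↔ _
  simp [Sum.map, Quotient.eq]

private lemma sumSetoid_rel_inl_inr (p : Setoid α) (q : Setoid β) (a : α) (b : β) :
    ¬ sumSetoid p q (Sum.inl a) (Sum.inr b) := by
  show ¬ Sum.map _ _ (Sum.inl a) = Sum.map _ _ (Sum.inr b)
  simp [Sum.map]

private lemma sumSetoid_rel_inr_inl (p : Setoid α) (q : Setoid β) (a : β) (b : α) :
    ¬ sumSetoid p q (Sum.inr a) (Sum.inl b) := by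
  show ¬ Sum.map _ _ (Sum.inr a) = Sum.map _ _ (Sum.inl b)
  simp [Sum.map]

private lemma nc_sumSetoid [Finite α] [Finite β] (p : Setoid α) (q : Setoid β) :
    nc (sumSetoid p q) = nc p + nc q := by
  have hsurj : Function.Surjective (Sum.map (Quotient.mk p) (Quotient.mk q)) :=
    Sum.map_surjective.mpr
      ⟨fun c => Quotient.inductionOn c fun a => ⟨a, rfl⟩,
       fun c => Quotient.inductionOn c fun a => ⟨a, rfl⟩⟩
  have e := Setoid.quotientKerEquivOfSurjective _ hsurj
  rw [nc, sumSetoid, Nat.card_congr e, Nat.card_sum]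
  rfl

private lemma sumSetoid_mono {p p' : Setoid α} {q q' : Setoid β}
    (hp : p ≤ p') (hq : q ≤ q') : sumSetoid p q ≤ sumSetoid p' q' := by
  rintro (a | a) (b | b) h
  · exact (sumSetoid_rel_inl p' q' a b).mpr (hp ((sumSetoid_rel_inl p q a b).mp h))
  · exact absurd h (sumSetoid_rel_inl_inr p q a b)
  · exact absurd h (sumSetoid_rel_inr_inl p q a b)
  · exact (sumSetoid_rel_inr p' q' a b).mpr (hq ((sumSetoid_rel_inr p q a b).mp h))

private lemma sumSetoid_sup (p₁ q₁ : Setoid α) (p₂ q₂ : Setoid β) :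
    sumSetoid p₁ p₂ ⊔ sumSetoid q₁ q₂ = sumSetoid (p₁ ⊔ q₁) (p₂ ⊔ q₂) := by
  refine le_antisymm
    (sup_le (sumSetoid_mono le_sup_left le_sup_left)
      (sumSetoid_mono le_sup_right le_sup_right)) ?_
  set S := sumSetoid p₁ p₂ ⊔ sumSetoid q₁ q₂ with hS
  have hl : p₁ ⊔ q₁ ≤ Setoid.comap Sum.inl S := by
    refine sup_le ?_ ?_
    · intro a b h
      exact le_sup_left (a := sumSetoid p₁ p₂) ((sumSetoid_rel_inl p₁ p₂ a b).mpr h)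
    · intro a b h
      exact le_sup_right (b := sumSetoid q₁ q₂) ((sumSetoid_rel_inl q₁ q₂ a b).mpr h)
  have hr : p₂ ⊔ q₂ ≤ Setoid.comap Sum.inr S := by
    refine sup_le ?_ ?_
    · intro a b h
      exact le_sup_left (a := sumSetoid p₁ p₂) ((sumSetoid_rel_inr p₁ p₂ a b).mpr h)
    · intro a b h
      exact le_sup_right (b := sumSetoid q₁ q₂) ((sumSetoid_rel_inr q₁ q₂ a b).mpr h)
  rintro (a | a) (b | b) h
  · exact hl ((sumSetoid_rel_inl _ _ a b).mp h)
  · exact absurd h (sumSetoid_rel_inl_inr _ _ a b)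
  · exact absurd h (sumSetoid_rel_inr_inl _ _ a b)
  · exact hr ((sumSetoid_rel_inr _ _ a b).mp h)

/-- `reindex` as an equivalence. -/
private lemma reindex_eq (k l : ℕ) :
    reindex k l = ⇑((Equiv.sumCongr finSumFinEquiv.symm finSumFinEquiv.symm).trans
      (Equiv.sumSumSumComm (Fin k) (Fin l) (Fin k) (Fin l))) := by
  funext x
  rcases x with j | j <;>
    rcases h : finSumFinEquiv.symm j with a | a <;>
      simp [reindex, h, Equiv.sumSumSumComm]

private def reindexEquiv (k l : ℕ) :
    (Fin (k + l) ⊕ Fin (k + l)) ≃ ((Fin k ⊕ Fin k) ⊕ (Fin l ⊕ Fin l)) :=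
  (Equiv.sumCongr finSumFinEquiv.symm finSumFinEquiv.symm).trans
    (Equiv.sumSumSumComm (Fin k) (Fin l) (Fin k) (Fin l))

private lemma tensor_eq {k l : ℕ} (p : Pk k) (q : Pk l) :
    tensor p q = Setoid.comap (reindexEquiv k l) (sumSetoid p q) := by
  rw [tensor, reindex_eq]
  rfl

private lemma nc_tensor {k l : ℕ} (p : Pk k) (q : Pk l) :
    nc (tensor p q) = nc p + nc q := by
  rw [tensor_eq, nc_comap_equiv, nc_sumSetoid]

private lemma tensor_sup {k l : ℕ} (p₁ q₁ : Pk k) (p₂ q₂ : Pk l) :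
    tensor p₁ p₂ ⊔ tensor q₁ q₂ = tensor (p₁ ⊔ q₁) (p₂ ⊔ q₂) := by
  simp only [tensor_eq]
  rw [← comap_equiv_sup, sumSetoid_sup]

private lemma comap_rel_iff {α β : Type*} (f : α → β) (r : Setoid β) (x y : α) :
    (Setoid.comap f r) x y ↔ r (f x) (f y) := Iff.rfl

private lemma tensor_rel_iff {k l : ℕ} (p : Pk k) (q : Pk l)
    (x y : Fin (k + l) ⊕ Fin (k + l)) :
    (tensor p q) x y ↔ (sumSetoid p q) (reindex k l x) (reindex k l y) := Iff.rfl

private lemma idk_rel_iff (n : ℕ) (x y : Fin n ⊕ Fin n) :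
    (idk n) x y ↔ Sum.elim id id x = Sum.elim id id y := Iff.rfl

private lemma reindex_inl_castAdd (k l : ℕ) (a : Fin k) :
    reindex k l (Sum.inl (Fin.castAdd l a)) = Sum.inl (Sum.inl a) := by
  simp [reindex, finSumFinEquiv_symm_apply_castAdd]

private lemma reindex_inl_natAdd (k l : ℕ) (a : Fin l) :
    reindex k l (Sum.inl (Fin.natAdd k a)) = Sum.inr (Sum.inl a) := by
  simp [reindex, finSumFinEquiv_symm_apply_natAdd]

private lemma reindex_inr_castAdd (k l : ℕ) (a : Fin k) :
    reindex k l (Sum.inr (Fin.castAdd l a)) = Sum.inl (Sum.inr a) := by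
  simp [reindex, finSumFinEquiv_symm_apply_castAdd]

private lemma reindex_inr_natAdd (k l : ℕ) (a : Fin l) :
    reindex k l (Sum.inr (Fin.natAdd k a)) = Sum.inr (Sum.inr a) := by
  simp [reindex, finSumFinEquiv_symm_apply_natAdd]

private lemma fin_add_cases (k l : ℕ) (j : Fin (k + l)) :
    (∃ a : Fin k, j = Fin.castAdd l a) ∨ (∃ b : Fin l, j = Fin.natAdd k b) := by
  rcases h : finSumFinEquiv.symm j with a | b
  · left
    refine ⟨a, ?_⟩
    have h2 := congrArg finSumFinEquiv h
    rw [Equiv.apply_symm_apply] at h2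
    rw [h2]
    rfl
  · right
    refine ⟨b, ?_⟩
    have h2 := congrArg finSumFinEquiv h
    rw [Equiv.apply_symm_apply] at h2
    rw [h2]
    rfl

private lemma idk_tensor (k l : ℕ) : idk (k + l) = tensor (idk k) (idk l) := by
  refine Setoid.ext fun x y => ?_
  rcases x with j | j <;> rcases y with j' | j' <;>
    rcases fin_add_cases k l j with ⟨a, rfl⟩ | ⟨a, rfl⟩ <;>
    rcases fin_add_cases k l j' with ⟨a', rfl⟩ | ⟨a', rfl⟩ <;>
    simp only [idk_rel_iff, tensor_rel_iff, reindex_inl_castAdd, reindex_inl_natAdd,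
      reindex_inr_castAdd, reindex_inr_natAdd, sumSetoid_rel_inl, sumSetoid_rel_inr,
      sumSetoid_rel_inl_inr, sumSetoid_rel_inr_inl, Sum.elim_inl, Sum.elim_inr,
      id_eq, iff_false, Fin.ext_iff, Fin.coe_castAdd, Fin.coe_natAdd] <;>
    · first
      | (constructor
         · intro h
           omega
         · intro h
           omega)
      | (intro h
         have ha := a.isLt
         have ha' := a'.isLt
         omega)

private lemma leftPart_tensor {k l : ℕ} (p : Pk k) (q : Pk l) :
    leftPart (tensor p q) = p := by
  refine Setoid.ext fun x y => ?_
  rcases x with a | a <;> rcases y with b | b <;>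
    rw [leftPart, comap_rel_iff] <;>
    simp only [leftPart, comap_rel_iff, Sum.map_inl, Sum.map_inr, tensor_rel_iff,
      reindex_inl_castAdd, reindex_inr_castAdd, sumSetoid_rel_inl]

private lemma rightPart_tensor {k l : ℕ} (p : Pk k) (q : Pk l) :
    rightPart (tensor p q) = q := by
  refine Setoid.ext fun x y => ?_
  rcases x with a | a <;> rcases y with b | b <;>
    rw [rightPart, comap_rel_iff] <;>
    simp only [rightPart, comap_rel_iff, Sum.map_inl, Sum.map_inr, tensor_rel_iff,
      reindex_inl_natAdd, reindex_inr_natAdd, sumSetoid_rel_inr]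

private lemma tensor_lr_le {k l : ℕ} (p : Pk (k + l)) :
    tensor (leftPart p) (rightPart p) ≤ p := by
  intro x y h
  rcases x with j | j <;> rcases y with j' | j' <;>
    rcases fin_add_cases k l j with ⟨a, rfl⟩ | ⟨a, rfl⟩ <;>
    rcases fin_add_cases k l j' with ⟨a', rfl⟩ | ⟨a', rfl⟩ <;>
    simp only [tensor_rel_iff, reindex_inl_castAdd, reindex_inl_natAdd,
      reindex_inr_castAdd, reindex_inr_natAdd, sumSetoid_rel_inl, sumSetoid_rel_inr,
      sumSetoid_rel_inl_inr, sumSetoid_rel_inr_inl,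
      leftPart, rightPart, comap_rel_iff, Sum.map_inl, Sum.map_inr] at h <;>
    exact h

private lemma leftPart_mono {k l : ℕ} {p q : Pk (k + l)} (h : p ≤ q) :
    leftPart p ≤ leftPart q := fun _ _ hr => h hr

private lemma rightPart_mono {k l : ℕ} {p q : Pk (k + l)} (h : p ≤ q) :
    rightPart p ≤ rightPart q := fun _ _ hr => h hr

end TensorAux


/-- If `p₁ ⊗ p₂` is finer than `p`, then
`df(p₁⊗p₂, p) = df(p₁, p^l) + df(p₂, p^r) + df(p^l⊗p^r, p)`; in particular
`p₁⊗p₂ ⊐ p` iff `p₁ ⊐ p^l`, `p₂ ⊐ p^r` and `p^l⊗p^r ⊐ p`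
(everything with base partition `id`). -/
theorem statement14 (k₁ k₂ : ℕ) (h₁ : 0 < k₁) (h₂ : 0 < k₂)
    (p : Pk (k₁ + k₂)) (p₁ : Pk k₁) (p₂ : Pk k₂) (hfine : tensor p₁ p₂ ≤ p) :
    df (idk (k₁ + k₂)) (tensor p₁ p₂) p =
      df (idk k₁) p₁ (leftPart p) + df (idk k₂) p₂ (rightPart p) +
        df (idk (k₁ + k₂)) (tensor (leftPart p) (rightPart p)) p ∧
    (finerComp (idk (k₁ + k₂)) (tensor p₁ p₂) p ↔
      finerComp (idk k₁) p₁ (leftPart p) ∧ finerComp (idk k₂) p₂ (rightPart p) ∧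
        finerComp (idk (k₁ + k₂)) (tensor (leftPart p) (rightPart p)) p) := by
  classical
  set b := idk (k₁ + k₂) with hb
  set pl := leftPart p with hpl
  set pr := rightPart p with hpr
  have hq : tensor pl pr ≤ p := tensor_lr_le p
  have h1 : p₁ ≤ pl := by
    rw [hpl, ← leftPart_tensor p₁ p₂]
    exact fun _ _ hr => hfine hr
  have h2 : p₂ ≤ pr := by
    rw [hpr, ← rightPart_tensor p₁ p₂]
    exact fun _ _ hr => hfine hr
  have gt_eq : ∀ (a : Pk k₁) (c : Pk k₂),
      (nc (tensor a c) : ℤ) - nc (tensor a c ⊔ b) =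
        ((nc a : ℤ) - nc (a ⊔ idk k₁)) + ((nc c : ℤ) - nc (c ⊔ idk k₂)) := by
    intro a c
    rw [hb, idk_tensor k₁ k₂, tensor_sup, nc_tensor, nc_tensor]
    push_cast
    ring
  have df_t : df b (tensor p₁ p₂) p =
      ((((nc p₁ : ℤ) - nc (p₁ ⊔ idk k₁)) + ((nc p₂ : ℤ) - nc (p₂ ⊔ idk k₂))
        - ((nc p : ℤ) - nc (p ⊔ b)) : ℤ) : ℚ) := by
    rw [df_eq_of_le hfine, gt_eq p₁ p₂]
  have df_q : df b (tensor pl pr) p =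
      ((((nc pl : ℤ) - nc (pl ⊔ idk k₁)) + ((nc pr : ℤ) - nc (pr ⊔ idk k₂))
        - ((nc p : ℤ) - nc (p ⊔ b)) : ℤ) : ℚ) := by
    rw [df_eq_of_le hq, gt_eq pl pr]
  have df_1 : df (idk k₁) p₁ pl =
      ((((nc p₁ : ℤ) - nc (p₁ ⊔ idk k₁)) - ((nc pl : ℤ) - nc (pl ⊔ idk k₁)) : ℤ) : ℚ) :=
    df_eq_of_le h1
  have df_2 : df (idk k₂) p₂ pr =
      ((((nc p₂ : ℤ) - nc (p₂ ⊔ idk k₂)) - ((nc pr : ℤ) - nc (pr ⊔ idk k₂)) : ℤ) : ℚ) :=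
    df_eq_of_le h2
  constructor
  · rw [df_t, df_q, df_1, df_2]
    push_cast
    ring
  · have mono1 : (nc pl : ℤ) - nc (pl ⊔ idk k₁) ≤ (nc p₁ : ℤ) - nc (p₁ ⊔ idk k₁) :=
      defect_mono (idk k₁) h1
    have mono2 : (nc pr : ℤ) - nc (pr ⊔ idk k₂) ≤ (nc p₂ : ℤ) - nc (p₂ ⊔ idk k₂) :=
      defect_mono (idk k₂) h2
    have mono3 : (nc p : ℤ) - nc (p ⊔ b) ≤
        (nc (tensor pl pr) : ℤ) - nc (tensor pl pr ⊔ b) :=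
      defect_mono b hq
    rw [gt_eq pl pr] at mono3
    constructor
    · rintro ⟨-, heq⟩
      rw [gt_eq p₁ p₂] at heq
      refine ⟨⟨h1, by omega⟩, ⟨h2, by omega⟩, ⟨hq, ?_⟩⟩
      rw [gt_eq pl pr]
      omega
    · rintro ⟨⟨-, e1⟩, ⟨-, e2⟩, ⟨-, e3⟩⟩
      rw [gt_eq pl pr] at e3
      refine ⟨hfine, ?_⟩
      rw [gt_eq p₁ p₂]
      omega


end PartitionPaper
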